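/- Let q be a prime power with q ≡ 1 (mod 4), and write q = 2^{A+1}·m + 1 with m odd and A ≥ 1 (so 2^{A+1} exactly divides q−1). If n ≥ A + 1, then over F_q the polynomial x^{2^n} + 1 factors as the product of 2^A irreducible binomials of degree 2^{n−A}: x^{2^n} + 1 = ∏_{u ∈ U_{A+1}} (x^{2^{n−A}} + u), where U_{A+1} is the set of primitive 2^{A+1}-th roots of unity in F_q, |U_{A+1}| = 2^A, and each factor x^{2^{n−A}} + u is irreducible over F_q. -/

import Mathlib

open Polynomial


/-- A monic divisor of a monic irreducible polynomial is 1 or the polynomial itself. -/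
lemma aux_monic_dvd_irred {L : Type*} [Field L] {h w : L[X]} (hh : h.Monic)
    (hhi : Irreducible h) (hw : w.Monic) (hdvd : w ∣ h) : w = 1 ∨ w = h := by
  obtain ⟨s, hs⟩ := hdvd
  rcases hhi.isUnit_or_isUnit hs with hu | hu
  · exact Or.inl (hw.eq_one_of_isUnit hu)
  · right
    have hsm : s.Monic := hw.of_mul_monic_left (hs ▸ hh)
    rw [hs, hsm.eq_one_of_isUnit hu, mul_one]

/-- Classification of monic divisors of a product of two monic irreducibles. -/
lemma aux_monic_dvd_mul {L : Type*} [Field L] {g h w : L[X]} (hg : g.Monic) (hh : h.Monic)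
    (hgi : Irreducible g) (hhi : Irreducible h) (hw : w.Monic) (hdvd : w ∣ g * h) :
    w = 1 ∨ w = g ∨ w = h ∨ w = g * h := by
  by_cases hgw : g ∣ w
  · obtain ⟨r, rfl⟩ := hgw
    have hrm : r.Monic := hg.of_mul_monic_left hw
    have hrh : r ∣ h := (mul_dvd_mul_iff_left (hg.ne_zero)).mp hdvd
    rcases aux_monic_dvd_irred hh hhi hrm hrh with h1 | h1
    · exact Or.inr (Or.inl (by rw [h1, mul_one]))
    · exact Or.inr (Or.inr (Or.inr (by rw [h1])))
  · have hco : IsCoprime w g := (hgi.coprime_iff_not_dvd.mpr hgw).symm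
    have hwh : w ∣ h := hco.dvd_of_dvd_mul_left hdvd
    rcases aux_monic_dvd_irred hh hhi hw hwh with h1 | h1
    · exact Or.inl h1
    · exact Or.inr (Or.inr (Or.inl h1))

/-- A monic multiple of a monic polynomial of at least the same degree equals it. -/
lemma aux_monic_dvd_eq {K : Type*} [Field K] {p q : K[X]} (hp : p.Monic) (hq : q.Monic)
    (h : q ∣ p) (hdeg : p.natDegree ≤ q.natDegree) : p = q := by
  obtain ⟨c, rfl⟩ := h
  have hcm : c.Monic := hq.of_mul_monic_left hp
  have hc0 : c ≠ 0 := hcm.ne_zero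
  rw [natDegree_mul hq.ne_zero hc0] at hdeg
  have : c.natDegree = 0 := by omega
  rw [hcm.natDegree_eq_zero.mp this, mul_one]

lemma aux_root_sq {K : Type*} [CommRing K] (a : K) :
    (AdjoinRoot.root (X ^ 2 - C a)) ^ 2 = AdjoinRoot.of (X ^ 2 - C a) a := by
  have h0 := AdjoinRoot.eval₂_root (X ^ 2 - C a : K[X])
  simp only [eval₂_sub, eval₂_pow, eval₂_X, eval₂_C] at h0
  exact sub_eq_zero.mp h0

lemma aux_nonsquare_pow {K : Type*} [Field K] [Fintype K] (hK : Fintype.card K % 4 = 1)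
    {a : K} (ha : ¬ IsSquare a) : a ^ (Fintype.card K / 2) = -1 := by
  have ha0 : a ≠ 0 := fun h => ha ⟨0, by simp [h]⟩
  have hchar : ringChar K ≠ 2 := by
    intro h
    have := FiniteField.even_card_of_char_two h
    omega
  rcases FiniteField.pow_dichotomy hchar ha0 with h | h
  · exact absurd ((FiniteField.isSquare_iff hchar ha0).mpr h) ha
  · exact h

universe u

lemma key_irred : ∀ (k : ℕ) (K : Type u) [Field K] [Fintype K] (a : K),
    Fintype.card K % 4 = 1 → ¬ IsSquare a → Irreducible ((X : K[X]) ^ 2 ^ k - C a) := by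
  intro k
  induction k with
  | zero =>
    intro K _ _ a _ _
    simpa using irreducible_X_sub_C a
  | succ k ih =>
    intro K _ _ a hK ha
    have ha0 : a ≠ 0 := fun h => ha ⟨0, by simp [h]⟩
    obtain ⟨s, hs⟩ : ∃ s, Fintype.card K = 4 * s + 1 := ⟨Fintype.card K / 4, by omega⟩
    -- the quadratic extension
    have hi2 : Irreducible ((X : K[X]) ^ 2 - C a) :=
      X_pow_sub_C_irreducible_of_prime Nat.prime_two
        (fun b hb => ha ⟨b, by rw [← hb]; ring⟩)
    haveI : Fact (Irreducible ((X : K[X]) ^ 2 - C a)) := ⟨hi2⟩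
    set f2 : K[X] := X ^ 2 - C a with hf2
    set L := AdjoinRoot f2 with hL
    have hne : f2 ≠ 0 := hi2.ne_zero
    haveI : Module.Finite K L := (AdjoinRoot.powerBasis hne).finite
    haveI : Finite L := Module.finite_of_finite K
    haveI : Fintype L := Fintype.ofFinite L
    have hfinrank : Module.finrank K L = 2 := by
      rw [(AdjoinRoot.powerBasis hne).finrank]
      simp [AdjoinRoot.powerBasis, hf2, natDegree_X_pow_sub_C]
    have hcardL : Fintype.card L = Fintype.card K ^ 2 := by
      rw [Module.card_eq_pow_finrank (K := K) (V := L), hfinrank]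
    have hsq : Fintype.card L = 16 * (s * s) + 8 * s + 1 := by
      rw [hcardL, hs]; ring
    set ι := algebraMap K L with hι
    have hinj : Function.Injective ι := (algebraMap K L).injective
    set b : L := AdjoinRoot.root f2 with hb
    have hbsq : b ^ 2 = ι a := by
      rw [hb, hι, AdjoinRoot.algebraMap_eq]
      exact aux_root_sq a
    have hb0 : b ≠ 0 := by
      intro h
      apply ha0
      apply hinj
      rw [map_zero, ← hbsq, h]
      ring
    have hcharL : ringChar L ≠ 2 := by
      intro h
      have := FiniteField.even_card_of_char_two (F := L) h
      omega
    have hneg1 : (-1 : L) ≠ 1 := Ring.neg_one_ne_one_of_char_ne_two hcharL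
    have haK : a ^ (Fintype.card K / 2) = -1 := aux_nonsquare_pow hK ha
    have h2 : Fintype.card K / 2 = 2 * s := by omega
    have h1 : Fintype.card L / 2 = 2 * (2 * s * (2 * s + 1)) := by
      have : 2 * (2 * s * (2 * s + 1)) = 8 * (s * s) + 4 * s := by ring
      omega
    -- b and -b are nonsquares in L
    have hbpow : b ^ (Fintype.card L / 2) = -1 := by
      rw [h1, pow_mul, hbsq, ← map_pow]
      have ha2s : a ^ (2 * s) = -1 := by rw [← h2]; exact haK
      have ha2 : a ^ (2 * s * (2 * s + 1)) = -1 := by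
        rw [pow_mul, ha2s, Odd.neg_one_pow ⟨s, by ring⟩]
      rw [ha2, map_neg, map_one]
    have hnegbpow : (-b) ^ (Fintype.card L / 2) = -1 := by
      have heven : Even (Fintype.card L / 2) := ⟨4 * (s * s) + 2 * s, by omega⟩
      rw [heven.neg_pow, hbpow]
    have hbns : ¬ IsSquare b := by
      intro h
      rw [FiniteField.isSquare_iff hcharL hb0] at h
      rw [h] at hbpow
      exact hneg1 hbpow.symm
    have hnegbns : ¬ IsSquare (-b) := by
      intro h
      rw [FiniteField.isSquare_iff hcharL (neg_ne_zero.mpr hb0)] at h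
      rw [h] at hnegbpow
      exact hneg1 hnegbpow.symm
    have hcardL4 : Fintype.card L % 4 = 1 := by omega
    -- the two irreducible factors over L
    set g : L[X] := X ^ 2 ^ k - C b with hg
    set h : L[X] := X ^ 2 ^ k - C (-b) with hh
    have hgm : g.Monic := monic_X_pow_sub_C b (pow_ne_zero _ two_ne_zero)
    have hhm : h.Monic := monic_X_pow_sub_C (-b) (pow_ne_zero _ two_ne_zero)
    have hgi : Irreducible g := ih L b hcardL4 hbns
    have hhi : Irreducible h := ih L (-b) hcardL4 hnegbns
    have hgdeg : g.natDegree = 2 ^ k := natDegree_X_pow_sub_C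
    have hhdeg : h.natDegree = 2 ^ k := natDegree_X_pow_sub_C
    -- the factorization over L
    set f : K[X] := X ^ 2 ^ (k + 1) - C a with hf
    have hfm : f.Monic := monic_X_pow_sub_C a (pow_ne_zero _ two_ne_zero)
    have hfdeg : f.natDegree = 2 ^ (k + 1) := natDegree_X_pow_sub_C
    have hmap : f.map ι = g * h := by
      rw [hf, hg, hh]
      simp only [Polynomial.map_sub, Polynomial.map_pow, map_X, map_C, map_neg,
        sub_neg_eq_add]
      rw [← hbsq]
      have hpow : (2 : ℕ) ^ (k + 1) = 2 ^ k * 2 := by rw [pow_succ]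
      rw [hpow, pow_mul, map_pow]
      ring
    -- b, -b not in the image of ι
    have hbnr : ∀ c : K, ι c ≠ b ∧ ι c ≠ -b := by
      intro c
      constructor
      · intro hc
        exact ha ⟨c, (hinj (by rw [map_mul, hc, ← sq, hbsq])).symm⟩
      · intro hc
        exact ha ⟨c, (hinj (by rw [map_mul, hc, neg_mul_neg, ← sq, hbsq])).symm⟩
    -- conclude irreducibility
    constructor
    · rw [Polynomial.isUnit_iff_degree_eq_zero]
      intro hdeg
      rw [degree_eq_natDegree hfm.ne_zero, hfdeg] at hdeg
      exact (pow_ne_zero (k + 1) (two_ne_zero)) (by exact_mod_cast hdeg)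
    · intro d e hde
      by_contra hcon
      push_neg at hcon
      obtain ⟨hd, he⟩ := hcon
      have hd0 : d ≠ 0 := fun h0 => hfm.ne_zero (by rw [hde, h0, zero_mul])
      have he0 : e ≠ 0 := fun h0 => hfm.ne_zero (by rw [hde, h0, mul_zero])
      have hddeg : d.natDegree ≠ 0 := by
        intro h0
        exact hd (Polynomial.isUnit_iff_degree_eq_zero.mpr
          (by rw [degree_eq_natDegree hd0, h0]; rfl))
      have hedeg : e.natDegree ≠ 0 := by
        intro h0
        exact he (Polynomial.isUnit_iff_degree_eq_zero.mpr
          (by rw [degree_eq_natDegree he0, h0]; rfl))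
      have hsum : d.natDegree + e.natDegree = 2 ^ (k + 1) := by
        rw [← hfdeg, hde, natDegree_mul hd0 he0]
      -- normalize d
      set d' : K[X] := d * C (d.leadingCoeff)⁻¹ with hd'
      have hd'm : d'.Monic := monic_mul_leadingCoeff_inv hd0
      have hdd' : d = d' * C d.leadingCoeff := by
        rw [hd', mul_assoc, ← C_mul, inv_mul_cancel₀ (leadingCoeff_ne_zero.mpr hd0), C_1,
          mul_one]
      have hddvdf : d ∣ f := by rw [hde]; exact dvd_mul_right d e
      have hd'dvd : d' ∣ f := dvd_trans ⟨C d.leadingCoeff, hdd'⟩ hddvdf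
      have hd'deg : d'.natDegree = d.natDegree := by
        rw [hd', natDegree_mul hd0 (C_ne_zero.mpr (inv_ne_zero (leadingCoeff_ne_zero.mpr hd0)))]
        simp
      set w : L[X] := d'.map ι with hw
      have hwm : w.Monic := hd'm.map ι
      have hwdvd : w ∣ g * h := by rw [← hmap]; exact Polynomial.map_dvd ι hd'dvd
      have hwdeg : w.natDegree = d.natDegree := by rw [hw, natDegree_map, hd'deg]
      rcases aux_monic_dvd_mul hgm hhm hgi hhi hwm hwdvd with h1 | h1 | h1 | h1
      · rw [h1, natDegree_one] at hwdeg; exact hddeg hwdeg.symm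
      · -- w = g : constant coefficient of g is b, in range of ι
        have hco := congrArg (fun p => Polynomial.coeff p 0) h1
        have hpos : (0:ℕ) < 2 ^ k := by positivity
        simp only [hw, hg, coeff_map, coeff_sub, coeff_X_pow, coeff_C, hpos.ne, if_false,
          ite_false, eq_self_iff_true, if_true, ite_true, zero_sub, neg_neg] at hco
        exact (hbnr (d'.coeff 0)).2 hco
      · have hco := congrArg (fun p => Polynomial.coeff p 0) h1
        have hpos : (0:ℕ) < 2 ^ k := by positivity
        simp only [hw, hh, coeff_map, coeff_sub, coeff_X_pow, coeff_C, hpos.ne, if_false,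
          ite_false, eq_self_iff_true, if_true, ite_true, zero_sub, neg_neg] at hco
        exact (hbnr (d'.coeff 0)).1 (hco.trans (neg_neg b))
      · have hwd2 : w.natDegree = 2 ^ (k + 1) := by
          rw [h1, natDegree_mul hgm.ne_zero hhm.ne_zero, hgdeg, hhdeg, pow_succ]; ring
        omega

open scoped Classical in
/-- Factorization of `x^(2^n) + 1` over `F_q`, `q ≡ 1 (mod 4)`, `q = 2^(A+1)·m + 1` with
`m` odd and `A ≥ 1`, in the range `n ≥ A + 1`: it is the product of the `2^A` irreducible
binomials `x^(2^(n-A)) + u` where `u` runs over the set of primitive `2^(A+1)`-th roots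
of unity in `F_q` (elements of multiplicative order exactly `2^(A+1)`). -/
theorem pow_two_pow_add_one_factorization_case_b'
    {q A m : ℕ} (F : Type*) [Field F] [Fintype F]
    (hcard : Fintype.card F = q) (hq1 : q % 4 = 1)
    (hm : Odd m) (hA : 1 ≤ A) (hq : q = 2 ^ (A + 1) * m + 1)
    (n : ℕ) (hn : A + 1 ≤ n) :
    ∀ U : Finset F, U = {u : F | orderOf u = 2 ^ (A + 1)}.toFinset →
      ((X ^ (2 ^ n) + 1 : F[X]) = ∏ u ∈ U, (X ^ (2 ^ (n - A)) + C u)) ∧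
      (∀ u ∈ U, Irreducible (X ^ (2 ^ (n - A)) + C u : F[X])) ∧
      U.card = 2 ^ A := by
  intro U hU
  have hq2 : Fintype.card F % 4 = 1 := by rw [hcard]; exact hq1
  have hchar : ringChar F ≠ 2 := by
    intro h
    have := FiniteField.even_card_of_char_two (F := F) h
    omega
  have hneg1 : (-1 : F) ≠ 1 := Ring.neg_one_ne_one_of_char_ne_two hchar
  have hmem : ∀ u : F, u ∈ U ↔ orderOf u = 2 ^ (A + 1) := by
    intro u
    rw [hU, Set.mem_toFinset]
    rfl
  have hu0 : ∀ u ∈ U, u ≠ 0 := by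
    intro u hu h0
    rw [hmem] at hu
    have h1 := pow_orderOf_eq_one u
    rw [hu, h0, zero_pow (pow_ne_zero _ two_ne_zero)] at h1
    exact zero_ne_one h1
  have hupow : ∀ u ∈ U, u ^ (2 ^ A) = -1 := by
    intro u hu
    rw [hmem] at hu
    have h1 : (u ^ 2 ^ A) * (u ^ 2 ^ A) = 1 := by
      rw [← pow_add]
      have h2 : 2 ^ A + 2 ^ A = 2 ^ (A + 1) := by rw [pow_succ]; ring
      rw [h2, ← hu, pow_orderOf_eq_one]
    rcases mul_self_eq_one_iff.mp h1 with h | h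
    · exfalso
      have hdvd : orderOf u ∣ 2 ^ A := orderOf_dvd_of_pow_eq_one h
      rw [hu] at hdvd
      have h3 := Nat.le_of_dvd (by positivity) hdvd
      have h4 : (2:ℕ) ^ A < 2 ^ (A + 1) := Nat.pow_lt_pow_right one_lt_two (Nat.lt_succ_self A)
      omega
    · exact h
  -- cardinality
  have hcardU : U.card = 2 ^ A := by
    have hdvd : 2 ^ (A + 1) ∣ Fintype.card Fˣ := by
      rw [Fintype.card_units, hcard, hq]
      exact ⟨m, by omega⟩
    have hcount : (Finset.univ.filter (fun x : Fˣ => orderOf x = 2 ^ (A + 1))).card = 2 ^ A := by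
      have h1 := IsCyclic.card_orderOf_eq_totient (α := Fˣ) hdvd
      rw [Nat.totient_prime_pow Nat.prime_two (Nat.succ_pos A)] at h1
      simpa using h1
    rw [← hcount]
    symm
    apply Finset.card_bij (fun (x : Fˣ) _ => (x : F))
    · intro x hx
      rw [Finset.mem_filter] at hx
      rw [hmem, orderOf_units]
      exact hx.2
    · intro x _ y _ hxy
      exact Units.ext hxy
    · intro u hu
      have hu' := hu
      rw [hmem] at hu'
      have hne : u ≠ 0 := hu0 u hu
      refine ⟨(isUnit_iff_ne_zero.mpr hne).unit, ?_, (isUnit_iff_ne_zero.mpr hne).unit_spec⟩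
      rw [Finset.mem_filter]
      refine ⟨Finset.mem_univ _, ?_⟩
      rw [← orderOf_units, (isUnit_iff_ne_zero.mpr hne).unit_spec]
      exact hu'
  -- the base factorization X^(2^A) + 1 = ∏ (X - v)
  set P : F[X] := X ^ 2 ^ A + 1 with hP
  have hPm : P.Monic := by
    have := monic_X_pow_add_C (R := F) (1 : F) (pow_ne_zero A two_ne_zero)
    simpa [hP] using this
  have hPdeg : P.natDegree = 2 ^ A := by
    have h1 : ((X : F[X]) ^ 2 ^ A + C 1).natDegree = 2 ^ A :=
      natDegree_X_pow_add_C
    simpa [hP] using h1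
  have hQm : (∏ v ∈ U, (X - C v) : F[X]).Monic :=
    monic_prod_of_monic _ _ (fun v _ => monic_X_sub_C v)
  have hQdeg : (∏ v ∈ U, (X - C v) : F[X]).natDegree = 2 ^ A := by
    rw [natDegree_prod _ _ (fun v _ => X_sub_C_ne_zero v)]
    simp [natDegree_X_sub_C, hcardU, Finset.sum_const]
  have hroot : ∀ v ∈ U, v ∈ P.roots := by
    intro v hv
    rw [mem_roots hPm.ne_zero]
    show P.eval v = 0
    rw [hP]
    simp [eval_add, eval_pow, eval_X, eval_one, hupow v hv]
  have hle : U.val ≤ P.roots := by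
    refine Multiset.le_iff_count.mpr (fun x => ?_)
    by_cases hx : x ∈ U
    · have h1 : U.val.count x = 1 := Multiset.count_eq_one_of_mem U.nodup hx
      rw [h1]
      exact Multiset.one_le_count_iff_mem.mpr (hroot x hx)
    · rw [Multiset.count_eq_zero_of_notMem (by exact hx)]
      exact Nat.zero_le _
  have hdvdP : (∏ v ∈ U, (X - C v) : F[X]) ∣ P := by
    have h1 : (∏ v ∈ U, (X - C v) : F[X]) = (U.val.map fun v => X - C v).prod := rfl
    rw [h1]
    exact dvd_trans (Multiset.prod_dvd_prod_of_le (Multiset.map_le_map hle))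
      (prod_multiset_X_sub_C_dvd P)
  have hPQ : P = ∏ v ∈ U, (X - C v) :=
    aux_monic_dvd_eq hPm hQm hdvdP (by rw [hPdeg, hQdeg])
  -- U is closed under negation
  have hevenA : Even ((2:ℕ) ^ A) := Nat.even_pow.mpr ⟨even_two, by omega⟩
  have hevenA1 : Even ((2:ℕ) ^ (A + 1)) := Nat.even_pow.mpr ⟨even_two, by omega⟩
  have hneg : ∀ u ∈ U, -u ∈ U := by
    intro u hu
    have horder := (hmem u).mp hu
    rw [hmem]
    have h1 : (-u) ^ (2 ^ (A + 1)) = 1 := by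
      rw [hevenA1.neg_pow, ← horder, pow_orderOf_eq_one]
    have h2 : (-u) ^ (2 ^ A) = -1 := by
      rw [hevenA.neg_pow, hupow u hu]
    obtain ⟨j, hj, hjeq⟩ :=
      (Nat.dvd_prime_pow Nat.prime_two).mp (orderOf_dvd_of_pow_eq_one h1)
    have hjA1 : j = A + 1 := by
      by_contra hne
      have hjA : j ≤ A := by omega
      have h3 : orderOf (-u) ∣ 2 ^ A := hjeq ▸ pow_dvd_pow 2 hjA
      have h4 := orderOf_dvd_iff_pow_eq_one.mp h3
      rw [h2] at h4
      exact hneg1 h4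
    rw [hjeq, hjA1]
  have himg : U.image (fun u => -u) = U :=
    Finset.eq_of_subset_of_card_le
      (fun v hv => by
        obtain ⟨u, hu, rfl⟩ := Finset.mem_image.mp hv
        exact hneg u hu)
      (by rw [Finset.card_image_of_injective _ neg_injective])
  -- substitution X ↦ X^(2^(n-A))
  have htA : 2 ^ (n - A) * 2 ^ A = 2 ^ n := by
    rw [← pow_add]
    congr 1
    omega
  have happ := congrArg (aeval ((X : F[X]) ^ 2 ^ (n - A))) hPQ
  simp only [hP, map_add, map_pow, map_one, aeval_X, map_prod, map_sub, aeval_C,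
    Polynomial.algebraMap_eq] at happ
  rw [← pow_mul, htA] at happ
  -- transform the product
  have hprod : ∏ v ∈ U, ((X : F[X]) ^ 2 ^ (n - A) - C v)
      = ∏ u ∈ U, ((X : F[X]) ^ 2 ^ (n - A) + C u) := by
    conv_lhs => rw [← himg]
    rw [Finset.prod_image (fun x _ y _ h => neg_injective h)]
    exact Finset.prod_congr rfl (fun u _ => by rw [map_neg, sub_neg_eq_add])
  -- irreducibility
  have hirr : ∀ u ∈ U, Irreducible ((X : F[X]) ^ 2 ^ (n - A) + C u) := by
    intro u hu
    have hns : ¬ IsSquare (-u) := by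
      intro hsq
      rw [FiniteField.isSquare_iff hchar (neg_ne_zero.mpr (hu0 u hu))] at hsq
      have hq' : q = 2 * (2 ^ A * m) + 1 := by rw [hq, pow_succ]; ring
      have hdiv : Fintype.card F / 2 = 2 ^ A * m := by rw [hcard]; omega
      rw [hdiv] at hsq
      have heven : Even (2 ^ A * m) := hevenA.mul_right m
      rw [heven.neg_pow, pow_mul, hupow u hu, hm.neg_one_pow] at hsq
      exact hneg1 hsq
    have h1 := key_irred (n - A) F (-u) hq2 hns
    rw [map_neg, sub_neg_eq_add] at h1
    exact h1
  exact ⟨by rw [happ, hprod], hirr, hcardU⟩
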